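/- arXiv:1208.3087 — 6 statements merged into one kernel-verified Lean document; each statement's English description precedes it below -/
import Mathlib

section
/- For every γ ∈ ℝ, every natural number h, and all reals m₁, m₂, the quadratic form (1/2)·(m₁, m₂)ᵀ P_γ^h (m₁, m₂) equals (1/4)(m₁ + m₂)² + (1/4)(1−γ)^h (m₁ − m₂)². Consequently, if a multiplier takes the two values m₁ and m₂ with equal probability and switches according to P_γ, then E(m_i m_{i−h}) = (E m)² + Var(m)·(1−γ)^h. -/
/-- The transition matrix of one binomial MSMD multiplier: diagonal entries `1 - γ/2`,
off-diagonal entries `γ/2`. -/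
noncomputable def Pgamma (γ : ℝ) : Matrix (Fin 2) (Fin 2) ℝ :=
  Matrix.of fun i j => if i = j then 1 - γ / 2 else γ / 2

lemma Pgamma_pow_eq (γ : ℝ) (h : ℕ) :
    Pgamma γ ^ h = Matrix.of fun i j =>
      if i = j then (1 + (1 - γ) ^ h) / 2 else (1 - (1 - γ) ^ h) / 2 := by
  induction h with
  | zero =>
    ext i j
    fin_cases i <;> fin_cases j <;>
      simp [Matrix.one_apply]
  | succ n ih =>
    rw [pow_succ, ih]
    ext i j
    fin_cases i <;> fin_cases j <;>
      simp [Matrix.mul_apply, Fin.sum_univ_two, Pgamma, pow_succ] <;> ring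

/-- the quadratic form `(1/2)·(m₁,m₂)ᵀ P_γ^h (m₁,m₂)` equals
`(1/4)(m₁+m₂)² + (1/4)(1-γ)^h (m₁-m₂)²`. -/
theorem quadform_Pgamma_pow (γ : ℝ) (h : ℕ) (m₁ m₂ : ℝ) :
    (1 / 2 : ℝ) * dotProduct ![m₁, m₂] ((Pgamma γ ^ h).mulVec ![m₁, m₂]) =
      (1 / 4) * (m₁ + m₂) ^ 2 + (1 / 4) * (1 - γ) ^ h * (m₁ - m₂) ^ 2 := by
  rw [Pgamma_pow_eq]
  simp [dotProduct, Matrix.mulVec, Fin.sum_univ_two]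
  ring
end

section
/- Let k ≥ 1, δ₁, …, δ_k ∈ (0,1), v ≥ 0, w ≥ 0, and define the autocovariance sequence c(0) = (1+v)^k (1+w) − 1 and, for integer h ≠ 0, c(h) = ∏_{j=1}^k (1 + v·δ_j^{|h|}) − 1. Then for every ω ∈ ℝ the series Σ_{h ∈ ℤ} c(h) e^{−iωh} converges absolutely and equals (1+v)^k · w + Σ_{∅ ≠ S ⊆ {1,…,k}} v^{|S|} (1 − D_S²) / (1 + D_S² − 2 D_S cos ω), where D_S = ∏_{j∈S} δ_j. -/
open Complex Finset


lemma normE (ω : ℝ) (h : ℤ) : ‖Complex.exp (-(Complex.I * ω * h))‖ = 1 := by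
  rw [Complex.norm_exp]
  simp

lemma geomZ (D : ℝ) (hD0 : 0 ≤ D) (hD1 : D < 1) (ω : ℝ) :
    HasSum (fun h : ℤ => ((D ^ h.natAbs : ℝ) : ℂ) * Complex.exp (-(Complex.I * ω * h)))
      (((1 - D ^ 2) / (1 + D ^ 2 - 2 * D * Real.cos ω) : ℝ) : ℂ) := by
  set u : ℂ := (D : ℂ) * Complex.exp (-(Complex.I * ω)) with hu
  set u' : ℂ := (D : ℂ) * Complex.exp (Complex.I * ω) with hu'
  have habs : ∀ z : ℂ, z.re = 0 → ‖(D : ℂ) * Complex.exp z‖ < 1 := by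
    intro z hz
    rw [norm_mul, Complex.norm_exp, hz]
    simpa [Complex.norm_real, _root_.abs_of_nonneg hD0] using hD1
  have hnu : ‖u‖ < 1 := habs _ (by simp)
  have hnu' : ‖u'‖ < 1 := habs _ (by simp)
  have h1 : HasSum (fun n : ℕ => u ^ n) (1 - u)⁻¹ := hasSum_geometric_of_norm_lt_one hnu
  have h2 : HasSum (fun n : ℕ => u' ^ (n + 1)) (u' * (1 - u')⁻¹) := by
    have := (hasSum_geometric_of_norm_lt_one hnu').mul_left u'
    refine this.congr_fun fun n => ?_
    rw [pow_succ']
  have hpos : HasSum (fun n : ℕ =>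
      ((D ^ ((n : ℤ)).natAbs : ℝ) : ℂ) * Complex.exp (-(Complex.I * ω * ((n : ℤ) : ℂ)))) (1 - u)⁻¹ := by
    refine h1.congr_fun fun n => ?_
    rw [Int.natAbs_natCast, hu, mul_pow, ← Complex.exp_nat_mul, Complex.ofReal_pow]
    congr 2
    push_cast
    ring
  have hneg : HasSum (fun n : ℕ =>
      ((D ^ ((-(n + 1) : ℤ)).natAbs : ℝ) : ℂ) *
        Complex.exp (-(Complex.I * ω * ((-(n + 1) : ℤ) : ℂ)))) (u' * (1 - u')⁻¹) := by
    refine h2.congr_fun fun n => ?_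
    have hna : ((-(n + 1) : ℤ)).natAbs = n + 1 := by omega
    rw [hna, hu', mul_pow, ← Complex.exp_nat_mul, Complex.ofReal_pow]
    congr 2
    push_cast
    ring
  have hsum : HasSum (fun h : ℤ => ((D ^ h.natAbs : ℝ) : ℂ) * Complex.exp (-(Complex.I * ω * h)))
      ((1 - u)⁻¹ + u' * (1 - u')⁻¹) := by
    refine HasSum.of_nat_of_neg_add_one ?_ ?_
    · exact hpos
    · exact hneg
  have h1u : (1 : ℂ) - u ≠ 0 := by
    intro hcon
    rw [sub_eq_zero] at hcon
    rw [← hcon] at hnu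
    simp at hnu
  have h1u' : (1 : ℂ) - u' ≠ 0 := by
    intro hcon
    rw [sub_eq_zero] at hcon
    rw [← hcon] at hnu'
    simp at hnu'
  have hee : Complex.exp (-(Complex.I * ω)) * Complex.exp (Complex.I * ω) = 1 := by
    rw [← Complex.exp_add]; simp
  have huu' : u * u' = (D : ℂ) ^ 2 := by
    rw [hu, hu']
    linear_combination (D : ℂ) ^ 2 * hee
  have hcos : Complex.exp (Complex.I * ω) + Complex.exp (-(Complex.I * ω)) = 2 * (Real.cos ω : ℂ) := by
    rw [Complex.ofReal_cos, Complex.cos]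
    ring_nf
  have hadd : u + u' = 2 * D * (Real.cos ω : ℂ) := by
    rw [hu, hu']
    linear_combination (D : ℂ) * hcos
  have hdpos : 0 < 1 + D ^ 2 - 2 * D * Real.cos ω := by
    nlinarith [Real.cos_le_one ω, sq_nonneg (1 - D)]
  have hden : ((1 + D ^ 2 - 2 * D * Real.cos ω : ℝ) : ℂ) ≠ 0 := by
    exact_mod_cast hdpos.ne'
  have hval : (1 - u)⁻¹ + u' * (1 - u')⁻¹ =
      ((1 - D ^ 2 : ℝ) : ℂ) / ((1 + D ^ 2 - 2 * D * Real.cos ω : ℝ) : ℂ) := by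
    have hd2 : (1 - u) * (1 - u') = ((1 + D ^ 2 - 2 * D * Real.cos ω : ℝ) : ℂ) := by
      push_cast
      linear_combination huu' - hadd - 2 * (D:ℂ) * Complex.ofReal_cos ω
    have hexp : ((1 - u)⁻¹ + u' * (1 - u')⁻¹) * ((1 - u) * (1 - u')) = 1 - u * u' := by
      field_simp
      ring
    rw [eq_div_iff hden, ← hd2, hexp, huu']
    push_cast
    ring
  rw [hval] at hsum
  rw [Complex.ofReal_div]
  exact hsum

lemma geomZR (D : ℝ) (hD0 : 0 ≤ D) (hD1 : D < 1) : Summable (fun h : ℤ => D ^ h.natAbs) := by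
  refine Summable.of_nat_of_neg_add_one ?_ ?_
  · exact (summable_geometric_of_lt_one hD0 hD1).congr fun n => by simp
  · refine ((summable_geometric_of_lt_one hD0 hD1).mul_left D).congr fun n => ?_
    have : ((-(n + 1) : ℤ)).natAbs = n + 1 := by omega
    rw [this, pow_succ']

lemma expand (k : ℕ) (v : ℝ) (δ : Fin k → ℝ) (n : ℕ) :
    ∏ j, (1 + v * δ j ^ n) =
      ∑ S ∈ Finset.univ.powerset, v ^ S.card * (∏ j ∈ S, δ j) ^ n := by
  have : ∀ j, 1 + v * δ j ^ n = v * δ j ^ n + 1 := fun j => by ring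
  simp_rw [this]
  rw [Finset.prod_add]
  refine Finset.sum_congr rfl fun S _ => ?_
  rw [Finset.prod_const_one, mul_one, Finset.prod_mul_distrib, Finset.prod_const,
    ← Finset.prod_pow]

/-- the spectral density of the MSMD duration process. With
`c(0) = (1+v)^k(1+w) − 1` and `c(h) = ∏ⱼ(1 + v·δⱼ^{|h|}) − 1` for `h ≠ 0`, the series
`Σ_{h ∈ ℤ} c(h) e^{−iωh}` converges absolutely and equals
`(1+v)^k·w + Σ_{∅ ≠ S ⊆ {1,…,k}} v^{|S|}(1 − D_S²)/(1 + D_S² − 2 D_S cos ω)`,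
where `D_S = ∏_{j∈S} δⱼ`. -/
theorem msmd_spectral_density
    (k : ℕ) (hk : 1 ≤ k) (δ : Fin k → ℝ) (hδ : ∀ j, δ j ∈ Set.Ioo (0 : ℝ) 1)
    (v w : ℝ) (hv : 0 ≤ v) (hw : 0 ≤ w)
    (c : ℤ → ℝ)
    (hc : ∀ h : ℤ, c h = if h = 0 then (1 + v) ^ k * (1 + w) - 1
      else (∏ j, (1 + v * δ j ^ h.natAbs)) - 1)
    (ω : ℝ) :
    Summable (fun h : ℤ => ‖(c h : ℂ) * Complex.exp (-(Complex.I * ω * h))‖) ∧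
      ∑' h : ℤ, (c h : ℂ) * Complex.exp (-(Complex.I * ω * h)) =
        (((1 + v) ^ k * w +
          ∑ S ∈ Finset.univ.powerset.erase (∅ : Finset (Fin k)),
            v ^ S.card * (1 - (∏ j ∈ S, δ j) ^ 2) /
              (1 + (∏ j ∈ S, δ j) ^ 2 - 2 * (∏ j ∈ S, δ j) * Real.cos ω) : ℝ) : ℂ) := by
  set T : Finset (Finset (Fin k)) := Finset.univ.powerset.erase (∅ : Finset (Fin k)) with hT
  -- basic facts about products over nonempty S
  have hD0 : ∀ S : Finset (Fin k), (0:ℝ) ≤ ∏ j ∈ S, δ j :=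
    fun S => Finset.prod_nonneg fun j _ => (hδ j).1.le
  have hD1 : ∀ S ∈ T, (∏ j ∈ S, δ j) < 1 := by
    intro S hS
    have hne : S.Nonempty := by
      rw [hT] at hS
      rcases Finset.nonempty_iff_ne_empty.2 (Finset.ne_of_mem_erase hS) with h
      exact h
    calc ∏ j ∈ S, δ j < ∏ j ∈ S, 1 :=
          Finset.prod_lt_prod_of_nonempty (fun j _ => (hδ j).1) (fun j _ => (hδ j).2) hne
      _ = 1 := Finset.prod_const_one
  -- rewrite c in expanded form
  have hsum_pow : ∀ n : ℕ, ∑ S ∈ T, v ^ S.card * (∏ j ∈ S, δ j) ^ n =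
      (∏ j, (1 + v * δ j ^ n)) - 1 := by
    intro n
    have h1 := expand k v δ n
    have h2 : (∅ : Finset (Fin k)) ∈ Finset.univ.powerset := Finset.empty_mem_powerset _
    have h3 := Finset.add_sum_erase _ (fun S => v ^ S.card * (∏ j ∈ S, δ j) ^ n) h2
    simp only [Finset.card_empty, pow_zero, Finset.prod_empty, one_pow, one_mul] at h3
    rw [hT]
    linarith [h1, h3]
  have hprod1 : (∏ j, (1 + v * δ j ^ 0)) = (1 + v) ^ k := by
    simp
  have hcr : ∀ h : ℤ, c h = (if h = 0 then (1 + v) ^ k * w else 0) +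
      ∑ S ∈ T, v ^ S.card * (∏ j ∈ S, δ j) ^ h.natAbs := by
    intro h
    rw [hc h]
    by_cases h0 : h = 0
    · subst h0
      rw [if_pos rfl, if_pos rfl, Int.natAbs_zero, hsum_pow 0, hprod1]
      ring
    · rw [if_neg h0, if_neg h0, hsum_pow h.natAbs]
      ring
  -- nonnegativity of c
  have hcnn : ∀ h : ℤ, 0 ≤ c h := by
    intro h
    rw [hcr h]
    have h1 : 0 ≤ (if h = 0 then (1 + v) ^ k * w else 0) := by
      split
      · exact mul_nonneg (pow_nonneg (by linarith) k) hw
      · exact le_rfl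
    have h2 : 0 ≤ ∑ S ∈ T, v ^ S.card * (∏ j ∈ S, δ j) ^ h.natAbs :=
      Finset.sum_nonneg fun S _ =>
        mul_nonneg (pow_nonneg hv _) (pow_nonneg (hD0 S) _)
    linarith
  -- norms
  have hnorm : ∀ h : ℤ, ‖(c h : ℂ) * Complex.exp (-(Complex.I * ω * h))‖ = c h := by
    intro h
    rw [norm_mul, normE, mul_one, Complex.norm_real, Real.norm_eq_abs, _root_.abs_of_nonneg (hcnn h)]
  -- summability
  have hsummable : Summable (fun h : ℤ => c h) := by
    have hspike : Summable (fun h : ℤ => if h = 0 then (1 + v) ^ k * w else 0) :=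
      (hasSum_ite_eq (0 : ℤ) ((1 + v) ^ k * w)).summable
    have hterms : Summable (fun h : ℤ => ∑ S ∈ T, v ^ S.card * (∏ j ∈ S, δ j) ^ h.natAbs) := by
      refine summable_sum fun S hS => ?_
      exact (geomZR _ (hD0 S) (hD1 S hS)).mul_left _
    exact ((hspike.add hterms).congr fun h => (hcr h).symm)
  have hS1 : Summable (fun h : ℤ => ‖(c h : ℂ) * Complex.exp (-(Complex.I * ω * h))‖) :=
    hsummable.congr fun h => (hnorm h).symm
  refine ⟨hS1, ?_⟩
  -- the complex HasSum
  have hspikeC : HasSum (fun h : ℤ => (if h = 0 then (((1 + v) ^ k * w : ℝ) : ℂ) else 0))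
      (((1 + v) ^ k * w : ℝ) : ℂ) := hasSum_ite_eq (0 : ℤ) _
  have htermsC : HasSum
      (fun h : ℤ => ∑ S ∈ T, ((v ^ S.card : ℝ) : ℂ) *
        (((((∏ j ∈ S, δ j)) ^ h.natAbs : ℝ)) : ℂ) * Complex.exp (-(Complex.I * ω * h)))
      (∑ S ∈ T, ((v ^ S.card : ℝ) : ℂ) *
        (((1 - (∏ j ∈ S, δ j) ^ 2) / (1 + (∏ j ∈ S, δ j) ^ 2
          - 2 * (∏ j ∈ S, δ j) * Real.cos ω) : ℝ) : ℂ)) := by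
    refine hasSum_sum fun S hS => ?_
    have := (geomZ (∏ j ∈ S, δ j) (hD0 S) (hD1 S hS) ω).mul_left ((v ^ S.card : ℝ) : ℂ)
    exact this.congr_fun fun h => by ring
  have htot := hspikeC.add htermsC
  have hfun : ∀ h : ℤ, (c h : ℂ) * Complex.exp (-(Complex.I * ω * h)) =
      (if h = 0 then (((1 + v) ^ k * w : ℝ) : ℂ) else 0) +
      ∑ S ∈ T, ((v ^ S.card : ℝ) : ℂ) *
        (((((∏ j ∈ S, δ j)) ^ h.natAbs : ℝ)) : ℂ) * Complex.exp (-(Complex.I * ω * h)) := by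
    intro h
    rw [hcr h, Complex.ofReal_add, add_mul]
    congr 1
    · by_cases h0 : h = 0
      · subst h0
        simp
      · simp [h0]
    · rw [Complex.ofReal_sum, Finset.sum_mul]
      exact Finset.sum_congr rfl fun S _ => by push_cast; ring
  have hfinal := htot.congr_fun fun h => hfun h
  rw [hfinal.tsum_eq, Complex.ofReal_add, Complex.ofReal_sum]
  congr 1
  refine Finset.sum_congr rfl fun S _ => ?_
  push_cast
  ring
end

section
/- Let μ be a Borel probability measure on ℝ with ∫ y dμ = 0 and V = ∫ y² dμ < ∞, let γ ∈ (0,1) and δ = 1 − γ. Then for all natural numbers h₁ < h₂, q ≥ 1, and every x ∈ ℝ, ∫∫ y·z K_{h₂−h₁}(y, dz) K_{h₁+q}(x, dy) = δ^{h₂+q} x² + δ^{h₂−h₁} (1 − δ^{h₁+q}) V. That is, for the centered multiplier chain, E(m̄_{i+h₁} m̄_{i+h₂} | m̄_{i−q} = x) = δ^{h₂+q} x² + δ^{h₂−h₁}(1−δ^{h₁+q}) E(m̄²). -/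
open MeasureTheory

/-- The `h`-step renewal kernel of one MSMD multiplier with renewal distribution `μ` and
switching probability `γ`: `K_h(x, ·) = (1 - (1-γ)^h)·μ + (1-γ)^h·δ_x`. -/
noncomputable def renewalKernel (μ : Measure ℝ) (γ : ℝ) (h : ℕ) (x : ℝ) : Measure ℝ :=
  ENNReal.ofReal (1 - (1 - γ) ^ h) • μ + ENNReal.ofReal ((1 - γ) ^ h) • Measure.dirac x

lemma renewalKernel_integral (μ : Measure ℝ) [IsProbabilityMeasure μ]
    (γ : ℝ) (hγ : γ ∈ Set.Ioo (0 : ℝ) 1) (h : ℕ) (x : ℝ) (f : ℝ → ℝ)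
    (hf : Integrable f μ) :
    ∫ z, f z ∂(renewalKernel μ γ h x) =
      (1 - (1 - γ) ^ h) * ∫ z, f z ∂μ + (1 - γ) ^ h * f x := by
  have hδ0 : (0:ℝ) ≤ 1 - γ := by linarith [hγ.2]
  have hδ1 : (1 - γ : ℝ) ≤ 1 := by linarith [hγ.1]
  have hph : (0:ℝ) ≤ (1 - γ) ^ h := pow_nonneg hδ0 h
  have hph1 : (1 - γ : ℝ) ^ h ≤ 1 := pow_le_one₀ hδ0 hδ1
  have hfd : Integrable f (Measure.dirac x) := by
    refine (integrable_const (f x)).congr ?_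
    rw [Filter.eventuallyEq_comm, MeasureTheory.ae_dirac_eq]
    exact Filter.eventually_pure.2 rfl
  rw [renewalKernel, integral_add_measure (hf.smul_measure ENNReal.ofReal_ne_top)
      (hfd.smul_measure ENNReal.ofReal_ne_top),
    integral_smul_measure, integral_smul_measure, integral_dirac,
    ENNReal.toReal_ofReal (by linarith), ENNReal.toReal_ofReal hph, smul_eq_mul,
    smul_eq_mul]

/-- for the centered multiplier chain (stationary law `μ` with mean 0 and
second moment `V`), for `h₁ < h₂`, `q ≥ 1` and every `x`,
`E(m̄_{i+h₁} m̄_{i+h₂} | m̄_{i−q} = x) = δ^{h₂+q} x² + δ^{h₂−h₁}(1−δ^{h₁+q}) V`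
where `δ = 1 − γ`. -/
theorem centered_chain_cross_moment
    (μ : Measure ℝ) [IsProbabilityMeasure μ]
    (hmean : ∫ y, y ∂μ = 0) (hmom : Integrable (fun y : ℝ => y ^ 2) μ)
    (V : ℝ) (hV : V = ∫ y, y ^ 2 ∂μ)
    (γ : ℝ) (hγ : γ ∈ Set.Ioo (0 : ℝ) 1) (δ : ℝ) (hδ : δ = 1 - γ)
    (h₁ h₂ q : ℕ) (hh : h₁ < h₂) (hq : 1 ≤ q) (x : ℝ) :
    ∫ y, (∫ z, y * z ∂(renewalKernel μ γ (h₂ - h₁) y)) ∂(renewalKernel μ γ (h₁ + q) x) =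
      δ ^ (h₂ + q) * x ^ 2 + δ ^ (h₂ - h₁) * (1 - δ ^ (h₁ + q)) * V := by
  have hid : Integrable (fun z : ℝ => z) μ := by
    refine ((integrable_const (1:ℝ)).add hmom).mono'
      measurable_id.aestronglyMeasurable ?_
    filter_upwards with z
    simp only [Pi.add_apply, Real.norm_eq_abs]
    nlinarith [sq_nonneg (|z| - 1), sq_abs z, abs_nonneg z]
  have hδ0 : (0:ℝ) ≤ δ := by rw [hδ]; linarith [hγ.2]
  have hinner : ∀ y : ℝ,
      ∫ z, y * z ∂(renewalKernel μ γ (h₂ - h₁) y) = δ ^ (h₂ - h₁) * y ^ 2 := by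
    intro y
    rw [renewalKernel_integral μ γ hγ _ _ _ (hid.const_mul y)]
    rw [integral_const_mul, hmean, hδ]
    ring
  rw [integral_congr_ae (Filter.Eventually.of_forall hinner),
    renewalKernel_integral μ γ hγ _ _ _ (hmom.const_mul _),
    integral_const_mul, ← hV, ← hδ]
  have hsum : h₂ - h₁ + (h₁ + q) = h₂ + q := by omega
  rw [← hsum, pow_add]
  ring
end

section
/- Let μ be a Borel probability measure on ℝ with ∫ y dμ = 0 and V = ∫ y² dμ < ∞, let γ ∈ (0,1) and δ = 1 − γ. Then for every natural number q ≥ 2 and every x ∈ ℝ, ∫∫ (z − δy)² K_1(y, dz) K_{q−1}(x, dy) = (δ^q − δ^{q+1}) x² + [(1 − δ^q) − δ²(1 − δ^{q−1})] V. That is, the conditional second moment of the innovation η_i = m̄_i − δ m̄_{i−1} given m̄_{i−q} = x equals (δ^q − δ^{q+1})x² + [(1−δ^q) − δ²(1−δ^{q−1})]E(m̄²); in particular its deviation from the unconditional value is (δ^q − δ^{q+1})(x² − V), which decays geometrically in q. -/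
open MeasureTheory

lemma integrable_dirac' {f : ℝ → ℝ} (hf : Measurable f) (x : ℝ) :
    Integrable f (Measure.dirac x) := by
  refine ⟨hf.aestronglyMeasurable, ?_⟩
  rw [HasFiniteIntegral, lintegral_dirac' _ (by fun_prop)]
  exact ENNReal.coe_lt_top

lemma renewal_integral (μ : Measure ℝ) (γ : ℝ) (hγ : γ ∈ Set.Ioo (0 : ℝ) 1)
    (h : ℕ) (x : ℝ) {f : ℝ → ℝ} (hfm : Measurable f) (hf : Integrable f μ) :
    ∫ y, f y ∂(renewalKernel μ γ h x) =
      (1 - (1 - γ) ^ h) * ∫ y, f y ∂μ + (1 - γ) ^ h * f x := by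
  have hb : (0 : ℝ) ≤ (1 - γ) ^ h := pow_nonneg (by linarith [hγ.2]) h
  have hb1 : (1 - γ) ^ h ≤ 1 := pow_le_one₀ (by linarith [hγ.2]) (by linarith [hγ.1])
  rw [renewalKernel, integral_add_measure (hf.smul_measure ENNReal.ofReal_ne_top)
      ((integrable_dirac' hfm x).smul_measure ENNReal.ofReal_ne_top),
    integral_smul_measure, integral_smul_measure, integral_dirac' _ _ hfm.stronglyMeasurable,
    ENNReal.toReal_ofReal (by linarith), ENNReal.toReal_ofReal hb]
  simp [smul_eq_mul]

/-- conditional second moment of the moving-average innovation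
`η_i = m̄_i − δ m̄_{i−1}` of the centered multiplier chain given `m̄_{i−q} = x`:
`∫∫ (z − δy)² K_1(y,dz) K_{q−1}(x,dy) = (δ^q − δ^{q+1})x² + ((1−δ^q) − δ²(1−δ^{q−1}))V`
for `q ≥ 2`, where `δ = 1 − γ`. -/
theorem innovation_conditional_second_moment
    (μ : Measure ℝ) [IsProbabilityMeasure μ]
    (hmean : ∫ y, y ∂μ = 0) (hmom : Integrable (fun y : ℝ => y ^ 2) μ)
    (V : ℝ) (hV : V = ∫ y, y ^ 2 ∂μ)
    (γ : ℝ) (hγ : γ ∈ Set.Ioo (0 : ℝ) 1) (δ : ℝ) (hδ : δ = 1 - γ)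
    (q : ℕ) (hq : 2 ≤ q) (x : ℝ) :
    ∫ y, (∫ z, (z - δ * y) ^ 2 ∂(renewalKernel μ γ 1 y)) ∂(renewalKernel μ γ (q - 1) x) =
      (δ ^ q - δ ^ (q + 1)) * x ^ 2 +
        ((1 - δ ^ q) - δ ^ 2 * (1 - δ ^ (q - 1))) * V := by
  have hδ0 : 0 < δ := by rw [hδ]; linarith [hγ.2]
  have hL1 : Integrable (fun y : ℝ => y) μ := by
    refine (hmom.add (integrable_const 1)).mono' measurable_id.aestronglyMeasurable ?_
    filter_upwards with y
    simp only [Real.norm_eq_abs, Pi.add_apply]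
    nlinarith [abs_nonneg y, sq_abs y, sq_nonneg (|y| - 1)]
  -- inner integral
  have inner : ∀ y : ℝ, (∫ z, (z - δ * y) ^ 2 ∂(renewalKernel μ γ 1 y)) =
      γ * V + γ * δ * y ^ 2 := by
    intro y
    have hint : Integrable (fun z : ℝ => (z - δ * y) ^ 2) μ := by
      have : (fun z : ℝ => (z - δ * y) ^ 2) =
          fun z => z ^ 2 + ((-(2 * δ * y)) * z + (δ * y) ^ 2) := by
        funext z; ring
      rw [this]
      exact hmom.add (((hL1.const_mul _)).add (integrable_const _))
    rw [renewal_integral μ γ hγ 1 y (by fun_prop) hint]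
    have i1 : Integrable (fun z : ℝ => -(2 * δ * y) * z) μ := hL1.const_mul _
    have hμint : ∫ z, (z - δ * y) ^ 2 ∂μ = V + (δ * y) ^ 2 := by
      have e : (fun z : ℝ => (z - δ * y) ^ 2) =
          fun z => z ^ 2 + (-(2 * δ * y) * z + (δ * y) ^ 2) := by
        funext z; ring
      have i3 : Integrable (fun z : ℝ => -(2 * δ * y) * z + (δ * y) ^ 2) μ := by
        exact i1.add (integrable_const _)
      rw [e, integral_add hmom i3,
        integral_add i1 (integrable_const _), integral_const_mul, hmean]
      simp [hV, measure_univ]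
    rw [hμint]
    have h1 : (1 : ℝ) - (1 - γ) ^ 1 = γ := by ring
    have h2 : (1 - γ) ^ 1 = δ := by rw [hδ]; ring
    rw [h1, h2]
    have hγδ : γ = 1 - δ := by rw [hδ]; ring
    rw [hγδ]; ring
  -- outer integral
  rw [integral_congr_ae (Filter.Eventually.of_forall inner)]
  have houter : Integrable (fun y : ℝ => γ * V + γ * δ * y ^ 2) μ :=
    (integrable_const _).add ((hmom.const_mul _))
  rw [renewal_integral μ γ hγ (q - 1) x (by fun_prop) houter]
  have i2 : Integrable (fun y : ℝ => γ * δ * y ^ 2) μ := hmom.const_mul _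
  have hμV : ∫ y, (γ * V + γ * δ * y ^ 2) ∂μ = γ * V + γ * δ * V := by
    rw [integral_add (integrable_const _) i2]
    simp [integral_const_mul, hV, measure_univ]
  rw [hμV]
  have hpow : (1 - γ) ^ (q - 1) = δ ^ (q - 1) := by rw [hδ]
  have hq1 : q - 1 + 1 = q := by omega
  have hδq : δ ^ q = δ * δ ^ (q - 1) := by
    rw [← pow_succ', hq1]
  have hδq1 : δ ^ (q + 1) = δ * δ ^ q := by rw [← pow_succ']
  rw [hpow]
  have hγδ : γ = 1 - δ := by rw [hδ]; ring
  rw [hγδ, hδq1, hδq]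
  ring
end

section
/- Let μ be a Borel probability measure on ℝ with ∫ y dμ = 0 and V = ∫ y² dμ < ∞, let γ ∈ (0,1), δ = 1 − γ. Then for all natural numbers h ≥ 1, q ≥ 2, and every x ∈ ℝ, ∫∫∫∫ (y₁ − δy₀)(y₃ − δy₂) K_1(y₂, dy₃) K_{h−1}(y₁, dy₂) K_1(y₀, dy₁) K_{q−1}(x, dy₀) = 0. That is, the conditional expectation E(η_i η_{i+h} | m̄_{i−q} = x) of the product of two moving-average innovations η_i = m̄_i − δ m̄_{i−1} at distinct times vanishes identically. -/
open MeasureTheory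

lemma inner_vanish (μ : Measure ℝ) [IsProbabilityMeasure μ]
    (hmean : ∫ y, y ∂μ = 0) (hmom : Integrable (fun y : ℝ => y ^ 2) μ)
    (γ : ℝ) (hγ : γ ∈ Set.Ioo (0 : ℝ) 1) (δ : ℝ) (hδ : δ = 1 - γ)
    (c y₂ : ℝ) :
    ∫ y₃, c * (y₃ - δ * y₂) ∂(renewalKernel μ γ 1 y₂) = 0 := by
  rw [integral_const_mul]
  have hy : Integrable (fun y : ℝ => y) μ := by
    refine (integrable_const (1 : ℝ)).add hmom |>.mono
      (measurable_id.aestronglyMeasurable) ?_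
    filter_upwards with y
    simp only [Real.norm_eq_abs, Pi.add_apply]
    have : |y| ≤ 1 + y ^ 2 := by nlinarith [abs_nonneg y, sq_abs y]
    calc |y| ≤ 1 + y ^ 2 := this
      _ ≤ |1 + y ^ 2| := le_abs_self _
  have h1 : Integrable (fun y : ℝ => y - δ * y₂) μ := hy.sub (integrable_const _)
  have h2 : Integrable (fun y : ℝ => y - δ * y₂) (Measure.dirac y₂) :=
    ⟨by fun_prop, by simp [HasFiniteIntegral, lintegral_dirac]⟩
  have hδ0 : 0 ≤ δ := by rw [hδ]; linarith [hγ.2]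
  have hγ0 : 0 ≤ γ := le_of_lt hγ.1
  rw [renewalKernel]
  rw [integral_add_measure (h1.smul_measure ENNReal.ofReal_ne_top) (h2.smul_measure ENNReal.ofReal_ne_top),
    integral_smul_measure, integral_smul_measure, integral_dirac,
    integral_sub hy (integrable_const _), hmean, integral_const]
  simp only [measure_univ, probReal_univ, ENNReal.toReal_one, one_smul, pow_one]
  rw [ENNReal.toReal_ofReal (by linarith), ENNReal.toReal_ofReal (by linarith)]
  simp only [smul_eq_mul]
  subst hδ; ring

/-- the conditional expectation `E(η_i η_{i+h} | m̄_{i−q} = x)` of the product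
of two moving-average innovations `η_i = m̄_i − δ m̄_{i−1}` at distinct times vanishes:
for `h ≥ 1`, `q ≥ 2` and every `x`,
`∫∫∫∫ (y₁ − δy₀)(y₃ − δy₂) K_1(y₂,dy₃) K_{h−1}(y₁,dy₂) K_1(y₀,dy₁) K_{q−1}(x,dy₀) = 0`. -/
theorem innovation_conditional_product_zero
    (μ : Measure ℝ) [IsProbabilityMeasure μ]
    (hmean : ∫ y, y ∂μ = 0) (hmom : Integrable (fun y : ℝ => y ^ 2) μ)
    (γ : ℝ) (hγ : γ ∈ Set.Ioo (0 : ℝ) 1) (δ : ℝ) (hδ : δ = 1 - γ)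
    (h q : ℕ) (hh : 1 ≤ h) (hq : 2 ≤ q) (x : ℝ) :
    ∫ y₀, (∫ y₁, (∫ y₂, (∫ y₃, (y₁ - δ * y₀) * (y₃ - δ * y₂)
        ∂(renewalKernel μ γ 1 y₂))
      ∂(renewalKernel μ γ (h - 1) y₁))
      ∂(renewalKernel μ γ 1 y₀))
      ∂(renewalKernel μ γ (q - 1) x) = 0 := by
  simp only [inner_vanish μ hmean hmom γ hγ δ hδ, integral_zero]
end

section
/- Let f and g be measurable functions from [−π, π] to ℝ that are strictly positive almost everywhere (with respect to Lebesgue measure), such that log f, log g, and f/g are Lebesgue integrable on [−π, π]. If f ≠ g on a set of positive Lebesgue measure, then ∫_{−π}^{π} (log g(ω) + f(ω)/g(ω)) dω > ∫_{−π}^{π} (log f(ω) + 1) dω. In particular, the limiting Whittle criterion Q(θ) = (1/2π)∫(log f(ω;θ) + f(ω;θ₀)/f(ω;θ)) dω is uniquely minimized at the spectral density of the true parameter θ₀, provided distinct parameters give spectral densities differing on a set of positive Lebesgue measure. -/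
open MeasureTheory Real

lemma key_ineq {a b : ℝ} (ha : 0 < a) (hb : 0 < b) :
    Real.log a + 1 ≤ Real.log b + a / b := by
  have ht : 0 < a / b := div_pos ha hb
  have h := Real.log_le_sub_one_of_pos ht
  have : Real.log (a / b) = Real.log a - Real.log b := Real.log_div ha.ne' hb.ne'
  linarith

lemma key_ineq_strict {a b : ℝ} (ha : 0 < a) (hb : 0 < b) (hab : a ≠ b) :
    Real.log a + 1 < Real.log b + a / b := by
  have ht : 0 < a / b := div_pos ha hb
  have ht1 : a / b ≠ 1 := by
    intro h; apply hab; field_simp at h; linarith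
  have h := Real.log_lt_sub_one_of_pos ht ht1
  have : Real.log (a / b) = Real.log a - Real.log b := Real.log_div ha.ne' hb.ne'
  linarith

/-- identification for the limiting Whittle criterion. Let `f, g` be
measurable functions on `[−π,π]` that are strictly positive a.e. (Lebesgue), with
`log f`, `log g` and `f/g` integrable on `[−π,π]`. If `f ≠ g` on a set of positive
Lebesgue measure, then
`∫ (log g(ω) + f(ω)/g(ω)) dω > ∫ (log f(ω) + 1) dω`;
i.e. the Whittle criterion is uniquely minimized at the true spectral density. -/
theorem whittle_identification
    (f g : ℝ → ℝ) (hf : Measurable f) (hg : Measurable g)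
    (hfpos : ∀ᵐ ω ∂(volume.restrict (Set.Icc (-π) π)), 0 < f ω)
    (hgpos : ∀ᵐ ω ∂(volume.restrict (Set.Icc (-π) π)), 0 < g ω)
    (hlogf : IntegrableOn (fun ω => Real.log (f ω)) (Set.Icc (-π) π))
    (hlogg : IntegrableOn (fun ω => Real.log (g ω)) (Set.Icc (-π) π))
    (hfg : IntegrableOn (fun ω => f ω / g ω) (Set.Icc (-π) π))
    (hne : 0 < volume {ω ∈ Set.Icc (-π) π | f ω ≠ g ω}) :
    (∫ ω in Set.Icc (-π) π, (Real.log (f ω) + 1)) <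
      ∫ ω in Set.Icc (-π) π, (Real.log (g ω) + f ω / g ω) := by
  set μ := volume.restrict (Set.Icc (-π) π) with hμ
  set h : ℝ → ℝ := fun ω => (Real.log (g ω) + f ω / g ω) - (Real.log (f ω) + 1) with hh
  have hconst : Integrable (fun _ : ℝ => (1 : ℝ)) μ := by
    apply integrable_const
  have hint1 : Integrable (fun ω => Real.log (f ω) + 1) μ := hlogf.add hconst
  have hint2 : Integrable (fun ω => Real.log (g ω) + f ω / g ω) μ := hlogg.add hfg
  have hinth : Integrable h μ := hint2.sub hint1
  have hnonneg : 0 ≤ᵐ[μ] h := by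
    filter_upwards [hfpos, hgpos] with ω hfω hgω
    have := key_ineq hfω hgω
    simp only [hh, Pi.zero_apply]
    linarith
  have hpos : 0 < ∫ ω, h ω ∂μ := by
    rw [integral_pos_iff_support_of_nonneg_ae hnonneg hinth]
    -- support h has positive measure
    set S := {ω ∈ Set.Icc (-π) π | f ω ≠ g ω} with hSdef
    have hS : MeasurableSet S := measurableSet_Icc.inter (measurableSet_eq_fun hf hg).compl
    have hSsub : S ⊆ Set.Icc (-π) π := Set.inter_subset_left
    have hμS : 0 < μ S := by
      rw [hμ, Measure.restrict_apply hS]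
      rwa [Set.inter_eq_self_of_subset_left hSsub]
    -- a.e. ω in S is in support h
    have hae : ∀ᵐ ω ∂μ, ω ∈ S → ω ∈ Function.support h := by
      filter_upwards [hfpos, hgpos] with ω hfω hgω hωS
      have hne' : f ω ≠ g ω := hωS.2
      have := key_ineq_strict hfω hgω hne'
      simp only [Function.mem_support, hh]
      intro hc
      linarith [sub_eq_zero.mp hc ▸ this]
    calc 0 < μ S := hμS
      _ ≤ μ (Function.support h) := by
          apply measure_mono_ae
          filter_upwards [hae] with ω hω hωS using hω hωS
  have := integral_sub hint2 hint1
  simp only [hh] at this hpos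
  rw [this] at hpos
  linarith
end
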